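/- Let A = [[A₁₁, A₁₂],[A₂₁, A₂₂]] ∈ R^(l×m) be a block matrix of rank r over R = k[z₁,…,zₙ], where A₁₁ is r×r with det(A₁₁) ≠ 0, and 1 ≤ r ≤ l. If the r×m submatrix [A₁₁ A₁₂] is minor left prime (the gcd of its r×r minors is a nonzero constant), then A₂₁·A₁₁⁻¹ is a polynomial matrix (i.e., has entries in R rather than merely in the fraction field), and A = [[I_r],[A₂₁A₁₁⁻¹]]·[A₁₁ A₁₂] is a factorization of A over R. -/

import Mathlib

open Matrix

/-- The set of `i × i` minors of a matrix. -/
def minorsSet {R : Type*} [CommRing R] {α β : Type*} (F : Matrix α β R)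
    (i : ℕ) : Set R :=
  {x | ∃ (ri : Fin i ↪ α) (ci : Fin i ↪ β), x = (F.submatrix ri ci).det}

lemma rank_submatrix_le'' {F : Type*} [Field F] {m n p q : Type*}
    [Fintype m] [Fintype n] [DecidableEq m] [DecidableEq n] [Fintype p] [Fintype q]
    (M : Matrix m n F) (f : p → m) (g : q → n) :
    (M.submatrix f g).rank ≤ M.rank := by
  have h1 : M.submatrix f g =
      ((1 : Matrix m m F).submatrix f (Equiv.refl m)) *
        (M * ((1 : Matrix n n F).submatrix (Equiv.refl n) g)) := by
    rw [mul_submatrix_one (Equiv.refl n) g M, one_submatrix_mul f (Equiv.refl m)]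
    ext i j
    simp [submatrix]
  rw [h1]
  exact le_trans (rank_mul_le_right _ _) (rank_mul_le_left _ _)

lemma den_dvd_of_eq {R : Type*} [CommRing R] [IsDomain R] [UniqueFactorizationMonoid R]
    {K : Type*} [Field K] [Algebra R K] [IsFractionRing R K] (x : K) (d p : R)
    (h : algebraMap R K d * x = algebraMap R K p) :
    (IsFractionRing.den R x : R) ∣ d := by
  have hden : algebraMap R K (IsFractionRing.den R x : R) ≠ 0 := by
    have h0 : (IsFractionRing.den R x : R) ≠ 0 := nonZeroDivisors.coe_ne_zero _
    exact fun hc => h0 (IsFractionRing.injective R K (by simpa using hc))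
  have hx : algebraMap R K (IsFractionRing.num R x) =
      x * algebraMap R K (IsFractionRing.den R x : R) :=
    (div_eq_iff hden).mp (IsFractionRing.mk'_num_den' R x)
  have key : d * IsFractionRing.num R x = p * (IsFractionRing.den R x : R) := by
    apply IsFractionRing.injective R K
    rw [_root_.map_mul, _root_.map_mul, hx, ← mul_assoc, h]
  have hdvd : (IsFractionRing.den R x : R) ∣ d * IsFractionRing.num R x :=
    ⟨p, by rw [key, mul_comm]⟩
  exact (IsFractionRing.num_den_reduced R x).symm.dvd_of_dvd_mul_right hdvd

theorem youla_gnavi_aux {R : Type*} [CommRing R] [IsDomain R] [UniqueFactorizationMonoid R]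
    {K : Type*} [Field K] [Algebra R K] [IsFractionRing R K]
    (r s t : ℕ)
    (A11 : Matrix (Fin r) (Fin r) R) (A12 : Matrix (Fin r) (Fin t) R)
    (A21 : Matrix (Fin s) (Fin r) R) (A22 : Matrix (Fin s) (Fin t) R)
    (hdet : A11.det ≠ 0)
    (hrank : ((fromBlocks A11 A12 A21 A22).map (algebraMap R K)).rank = r)
    (hMLP : ∀ c : R, (∀ x ∈ minorsSet (fromCols A11 A12) r, c ∣ x) → IsUnit c) :
    ∃ B : Matrix (Fin s) (Fin r) R,
      B.map (algebraMap R K) = (A21.map (algebraMap R K)) * (A11.map (algebraMap R K))⁻¹ ∧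
      fromBlocks A11 A12 A21 A22 = fromRows (1 : Matrix (Fin r) (Fin r) R) B *
        fromCols A11 A12 := by
  let φ : R →+* K := algebraMap R K
  have hφinj : Function.Injective φ := IsFractionRing.injective R K
  have hdm : (A11.map ⇑φ).det = φ A11.det := (RingHom.map_det φ A11).symm
  have hdet' : (A11.map ⇑φ).det ≠ 0 := by
    rw [hdm]
    exact fun hc => hdet (hφinj (by simpa using hc))
  have hu : IsUnit (A11.map ⇑φ).det := hdet'.isUnit
  -- Key step: the Schur-complement entries vanish
  have hA22 : ∀ (i : Fin s) (j : Fin t),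
      (A21.map ⇑φ * (A11.map ⇑φ)⁻¹ * A12.map ⇑φ) i j = (A22.map ⇑φ) i j := by
    intro i j
    set A' := (fromBlocks A11 A12 A21 A22).map ⇑φ with hA'
    set f : Fin r ⊕ Fin 1 → Fin r ⊕ Fin s := Sum.map id (fun _ => i) with hf
    set g : Fin r ⊕ Fin 1 → Fin r ⊕ Fin t := Sum.map id (fun _ => j) with hg
    have hsub : A'.submatrix f g =
        fromBlocks (A11.map ⇑φ) ((A12.map ⇑φ).submatrix id (fun _ : Fin 1 => j))
          ((A21.map ⇑φ).submatrix (fun _ : Fin 1 => i) id)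
          (Matrix.of (fun (_ : Fin 1) (_ : Fin 1) => (A22.map ⇑φ) i j)) := by
      ext a b
      rcases a with a | a <;> rcases b with b | b <;>
        simp [hf, hg, hA', fromBlocks, submatrix]
    have hrk : (A'.submatrix f g).rank ≤ r :=
      (rank_submatrix_le'' A' f g).trans hrank.le
    have hdet0 : (A'.submatrix f g).det = 0 := by
      by_contra hne
      have h1 := (A'.submatrix f g).rank_of_isUnit
        ((Matrix.isUnit_iff_isUnit_det _).mpr (isUnit_iff_ne_zero.mpr hne))
      rw [h1] at hrk
      simp only [Fintype.card_sum, Fintype.card_fin] at hrk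
      omega
    rw [hsub] at hdet0
    haveI : Invertible (A11.map ⇑φ) := (A11.map ⇑φ).invertibleOfIsUnitDet hu
    rw [det_fromBlocks₁₁] at hdet0
    rcases mul_eq_zero.mp hdet0 with h0 | h0
    · exact absurd h0 hdet'
    · rw [invOf_eq_nonsing_inv, Matrix.det_fin_one, Matrix.sub_apply, sub_eq_zero] at h0
      have hexp : (A21.map ⇑φ * (A11.map ⇑φ)⁻¹ * A12.map ⇑φ) i j =
          ((A21.map ⇑φ).submatrix (fun _ : Fin 1 => i) id * (A11.map ⇑φ)⁻¹ *
            (A12.map ⇑φ).submatrix id (fun _ : Fin 1 => j)) 0 0 := by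
        simp [mul_apply]
      rw [hexp, ← h0]
      rfl
  set Bk : Matrix (Fin s) (Fin r) K := A21.map ⇑φ * (A11.map ⇑φ)⁻¹ with hBk
  have hB11 : Bk * A11.map ⇑φ = A21.map ⇑φ := by
    rw [hBk, Matrix.nonsing_inv_mul_cancel_right _ _ hu]
  have hB12 : Bk * A12.map ⇑φ = A22.map ⇑φ := by
    ext i j
    exact hA22 i j
  have e2 : (fromCols A11 A12).map ⇑φ = fromCols (A11.map ⇑φ) (A12.map ⇑φ) := by
    ext a b; rcases b with b | b <;> simp [fromCols]
  have e3 : (fromCols A21 A22).map ⇑φ = fromCols (A21.map ⇑φ) (A22.map ⇑φ) := by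
    ext a b; rcases b with b | b <;> simp [fromCols]
  have h1 : Bk * (fromCols A11 A12).map ⇑φ = (fromCols A21 A22).map ⇑φ := by
    rw [e2, e3, mul_fromCols, hB11, hB12]
  -- each entry of Bk is integral
  have hint : ∀ (i : Fin s) (j : Fin r), ∃ b : R, φ b = Bk i j := by
    intro i j
    have hqdvd0 : ∀ ci : Fin r ↪ (Fin r ⊕ Fin t),
        (IsFractionRing.den R (Bk i j) : R) ∣
          ((fromCols A11 A12).submatrix id ⇑ci).det := by
      intro ci
      set M := (fromCols A11 A12).submatrix id ⇑ci with hM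
      set N := (fromCols A21 A22).submatrix id ⇑ci with hN
      have hcol : Bk * M.map ⇑φ = N.map ⇑φ := by
        ext a b
        have := congrFun (congrFun h1 a) (ci b)
        simpa [mul_apply, hM, hN, submatrix, map_apply] using this
      have hadj : Bk * (M.map ⇑φ * (M.map ⇑φ).adjugate) =
          N.map ⇑φ * (M.map ⇑φ).adjugate := by
        rw [← Matrix.mul_assoc, hcol]
      rw [Matrix.mul_adjugate] at hadj
      have hdetmap : (M.map ⇑φ).det = φ M.det := (RingHom.map_det φ M).symm
      have hadjmap : (M.map ⇑φ).adjugate = M.adjugate.map ⇑φ := (RingHom.map_adjugate φ M).symm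
      have hmm : N.map ⇑φ * (M.map ⇑φ).adjugate = (N * M.adjugate).map ⇑φ := by
        rw [hadjmap, ← Matrix.map_mul]
      rw [hdetmap, hmm, Matrix.mul_smul, Matrix.mul_one] at hadj
      have hentry : φ M.det * Bk i j = φ ((N * M.adjugate) i j) := by
        have := congrFun (congrFun hadj i) j
        rw [Matrix.smul_apply, smul_eq_mul] at this
        exact this
      exact den_dvd_of_eq (Bk i j) _ _ hentry
    have hqdvd : ∀ y ∈ minorsSet (fromCols A11 A12) r,
        (IsFractionRing.den R (Bk i j) : R) ∣ y := by
      rintro y ⟨ri, ci, rfl⟩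
      have hbij : Function.Bijective ⇑ri :=
        (Fintype.bijective_iff_injective_and_card ⇑ri).mpr ⟨ri.injective, rfl⟩
      set e : Equiv.Perm (Fin r) := Equiv.ofBijective ⇑ri hbij with he
      have hperm : (fromCols A11 A12).submatrix ⇑ri ⇑ci =
          ((fromCols A11 A12).submatrix id ⇑ci).submatrix ⇑e id := by
        ext a b; simp [he, submatrix, Equiv.ofBijective]
      rw [hperm, Matrix.det_permute]
      exact Dvd.dvd.mul_left (hqdvd0 ci) _
    exact IsFractionRing.isInteger_of_isUnit_den (hMLP _ hqdvd)
  choose B hBspec using fun i => hint i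
  refine ⟨Matrix.of (fun i j => B i j), ?_, ?_⟩
  · ext i j
    exact hBspec i j
  · have hmap : (Matrix.of (fun i j => B i j)).map ⇑φ = Bk := by
      ext i j; exact hBspec i j
    have hinj : Function.Injective
        (fun (X : Matrix (Fin s) (Fin r ⊕ Fin t) R) => X.map ⇑φ) := by
      intro X Y hXY
      ext a b
      exact hφinj (congrFun (congrFun hXY a) b)
    have hB : (Matrix.of (fun i j => B i j)) * fromCols A11 A12 =
        fromCols A21 A22 := by
      apply hinj
      show ((Matrix.of (fun i j => B i j)) * fromCols A11 A12).map ⇑φ =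
        (fromCols A21 A22).map ⇑φ
      rw [Matrix.map_mul, hmap, h1]
    rw [← fromRows_fromCols_eq_fromBlocks, fromRows_mul, Matrix.one_mul, hB]

/-- Youla–Gnavi: Let `A = [[A₁₁,A₁₂],[A₂₁,A₂₂]]` over `R = k[z₁,…,zₙ]`
(`k` algebraically closed) have rank `r`, with `A₁₁ ∈ R^(r×r)`, `det A₁₁ ≠ 0`. If
`[A₁₁ A₁₂]` is minor left prime, then `A₂₁·A₁₁⁻¹` is a polynomial matrix `B` and
`A = [[I_r],[B]]·[A₁₁ A₁₂]`. -/
theorem youla_gnavi_mlp_factorization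
    {k : Type*} [Field k] [IsAlgClosed k] (n r s t : ℕ) (hr : 1 ≤ r)
    (A11 : Matrix (Fin r) (Fin r) (MvPolynomial (Fin n) k))
    (A12 : Matrix (Fin r) (Fin t) (MvPolynomial (Fin n) k))
    (A21 : Matrix (Fin s) (Fin r) (MvPolynomial (Fin n) k))
    (A22 : Matrix (Fin s) (Fin t) (MvPolynomial (Fin n) k))
    (hdet : A11.det ≠ 0)
    (hrank : ((fromBlocks A11 A12 A21 A22).map (algebraMap (MvPolynomial (Fin n) k)
      (FractionRing (MvPolynomial (Fin n) k)))).rank = r)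
    (hMLP : ∀ c : MvPolynomial (Fin n) k,
      (∀ x ∈ minorsSet (fromCols A11 A12) r, c ∣ x) → IsUnit c) :
    ∃ B : Matrix (Fin s) (Fin r) (MvPolynomial (Fin n) k),
      B.map (algebraMap (MvPolynomial (Fin n) k) (FractionRing (MvPolynomial (Fin n) k))) =
        (A21.map (algebraMap (MvPolynomial (Fin n) k)
          (FractionRing (MvPolynomial (Fin n) k)))) *
        (A11.map (algebraMap (MvPolynomial (Fin n) k)
          (FractionRing (MvPolynomial (Fin n) k))))⁻¹ ∧
      fromBlocks A11 A12 A21 A22 =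
        fromRows (1 : Matrix (Fin r) (Fin r) (MvPolynomial (Fin n) k)) B *
          fromCols A11 A12 :=
  youla_gnavi_aux r s t A11 A12 A21 A22 hdet hrank hMLP
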